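/- arXiv:2207.02728 — 2 statements merged into one kernel-verified Lean document; each statement's English description precedes it below -/
import Mathlib

section
/- Over GF(2), the incidence vectors of an odd-town family are linearly independent. -/
lemma odd_cast_zmod2 {c : ℕ} (h : Odd c) : (c : ZMod 2) = 1 := by
  rw [← Nat.mod_add_div c 2, Nat.odd_iff.mp h]
  push_cast
  simp [show (2:ZMod 2)=0 by decide]

lemma even_cast_zmod2 {c : ℕ} (h : Even c) : (c : ZMod 2) = 0 := by
  rw [← Nat.mod_add_div c 2, Nat.even_iff.mp h]
  push_cast
  simp [show (2:ZMod 2)=0 by decide]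

theorem odd_town_linear_independent (n m : ℕ) (Bl : Fin m → Finset (Fin n))
    (hodd : ∀ i, Odd (Bl i).card)
    (heven : ∀ i j, i ≠ j → Even ((Bl i ∩ Bl j).card)) :
    LinearIndependent (ZMod 2)
      (fun i : Fin m => fun p : Fin n => if p ∈ Bl i then (1 : ZMod 2) else 0) := by
  set v : Fin m → Fin n → ZMod 2 :=
    fun i p => if p ∈ Bl i then (1 : ZMod 2) else 0 with hv
  have key : ∀ i j, ∑ p, v i p * v j p = ((Bl i ∩ Bl j).card : ZMod 2) := by
    intro i j
    have h1 : ∀ p : Fin n, v i p * v j p = if p ∈ Bl i ∩ Bl j then (1 : ZMod 2) else 0 := by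
      intro p
      simp only [hv, Finset.mem_inter]
      by_cases h1 : p ∈ Bl i <;> by_cases h2 : p ∈ Bl j <;> simp [h1, h2]
    simp only [h1]
    rw [Finset.sum_ite_mem, Finset.univ_inter, Finset.sum_const, nsmul_eq_mul, mul_one]
  rw [Fintype.linearIndependent_iff]
  intro g hg j
  have h0 : ∑ p, (∑ i, g i * v i p) * v j p = 0 := by
    have hp : ∀ p, (∑ i, g i * v i p) = 0 := by
      intro p
      have := congrFun hg p
      simpa [Finset.sum_apply] using this
    simp [hp]
  simp_rw [Finset.sum_mul] at h0
  rw [Finset.sum_comm] at h0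
  simp_rw [mul_assoc, ← Finset.mul_sum, key] at h0
  rw [Finset.sum_eq_single j] at h0
  · rw [odd_cast_zmod2 (by simpa using hodd j)] at h0
    simpa using h0
  · intro i _ hij
    rw [even_cast_zmod2 (heven i j hij), mul_zero]
  · simp
end

section
/- Generalised Fisher's inequality: if A_1,...,A_m are distinct subsets of {1,...,n} with |A_i ∩ A_j| = k for some fixed 1 ≤ k ≤ n and all i ≠ j, then m ≤ n. -/
open Finset

theorem generalised_fishers_inequality (n m k : ℕ) (hk1 : 1 ≤ k) (hkn : k ≤ n)
    (A : Fin m → Finset (Fin n)) (hdist : Function.Injective A)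
    (hint : ∀ i j, i ≠ j → (A i ∩ A j).card = k) :
    m ≤ n := by
  rcases le_or_gt m 1 with hm | hm
  · exact hm.trans (hk1.trans hkn)
  have : Nontrivial (Fin m) := Fin.nontrivial_iff_two_le.mpr hm
  have hcard : ∀ i, k ≤ (A i).card := by
    intro i
    obtain ⟨j, hj⟩ := exists_ne i
    calc k = (A i ∩ A j).card := (hint i j (Ne.symm hj)).symm
    _ ≤ (A i).card := card_le_card inter_subset_left
  have huniq : ∀ i j, (A i).card = k → (A j).card = k → i = j := by
    intro i j hi hj
    by_contra hne
    have h1 : A i ∩ A j = A i :=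
      eq_of_subset_of_card_le inter_subset_left (by rw [hint i j hne, hi])
    have h2 : A i ∩ A j = A j :=
      eq_of_subset_of_card_le inter_subset_right (by rw [hint i j hne, hj])
    exact hne (hdist (h1.symm.trans h2))
  set v : Fin m → (Fin n → ℝ) := fun i x => if x ∈ A i then 1 else 0 with hv
  have hdot : ∀ i j, ∑ x, v i x * v j x = ((A i ∩ A j).card : ℝ) := by
    intro i j
    have h : ∀ x, v i x * v j x = if x ∈ A i ∩ A j then (1:ℝ) else 0 := by
      intro x; by_cases h1 : x ∈ A i <;> by_cases h2 : x ∈ A j <;> simp [hv, h1, h2]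
    simp_rw [h]
    rw [Finset.sum_ite_mem, Finset.univ_inter, Finset.sum_const, nsmul_eq_mul, mul_one]
  have hli : LinearIndependent ℝ v := by
    rw [Fintype.linearIndependent_iff]
    intro c hc
    set S := ∑ i, c i with hS
    have hzero : (0:ℝ) = ∑ x, (∑ i, c i * v i x)^2 := by
      have h : ∀ x, ∑ i, c i * v i x = 0 := by
        intro x
        have := congrFun hc x
        simpa using this
      simp [h]
    have expand : ∑ x, (∑ i, c i * v i x)^2
        = ∑ i, ∑ j, c i * c j * ((A i ∩ A j).card : ℝ) := by
      simp_rw [sq, Finset.sum_mul_sum]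
      rw [Finset.sum_comm]
      congr 1; ext i
      rw [Finset.sum_comm]
      congr 1; ext j
      rw [← hdot i j, Finset.mul_sum]
      congr 1; ext x; ring
    have key : ∑ i, ∑ j, c i * c j * ((A i ∩ A j).card : ℝ)
        = k * S^2 + ∑ i, (c i)^2 * (((A i).card : ℝ) - k) := by
      have h : ∀ i j, c i * c j * ((A i ∩ A j).card : ℝ)
          = k * (c i * c j) + (if j = i then (c i)^2 * (((A i).card : ℝ) - k) else 0) := by
        intro i j
        rcases eq_or_ne j i with rfl | hne
        · simp; ring
        · rw [hint i j (Ne.symm hne), if_neg hne]; ring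
      simp_rw [h, Finset.sum_add_distrib, Finset.sum_ite_eq' Finset.univ]
      simp only [Finset.mem_univ, if_true]
      have h2 : ∑ i, ∑ j, (k:ℝ) * (c i * c j) = k * S^2 := by
        rw [hS, sq, Finset.sum_mul_sum, Finset.mul_sum]
        congr 1; ext i
        rw [Finset.mul_sum]
      rw [h2]
    have htot : (0:ℝ) = k * S^2 + ∑ i, (c i)^2 * (((A i).card : ℝ) - k) := by
      rw [hzero, expand, key]
    have hnn1 : (0:ℝ) ≤ k * S^2 := by positivity
    have hnn2 : ∀ i ∈ Finset.univ, (0:ℝ) ≤ (c i)^2 * (((A i).card : ℝ) - k) := by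
      intro i _
      apply mul_nonneg (sq_nonneg _)
      have := hcard i
      have : (k:ℝ) ≤ ((A i).card : ℝ) := by exact_mod_cast this
      linarith
    have hsumnn : (0:ℝ) ≤ ∑ i, (c i)^2 * (((A i).card : ℝ) - k) :=
      Finset.sum_nonneg hnn2
    have h1 : (k:ℝ) * S^2 = 0 := by linarith
    have h2 : ∑ i, (c i)^2 * (((A i).card : ℝ) - k) = 0 := by linarith
    have hS0 : S = 0 := by
      have hk : (k:ℝ) ≠ 0 := by positivity
      have := mul_eq_zero.mp h1
      rcases this with h | h
      · exact absurd h hk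
      · exact pow_eq_zero_iff (by norm_num) |>.mp h
    have hterm : ∀ i, (c i)^2 * (((A i).card : ℝ) - k) = 0 := by
      intro i
      have := (Finset.sum_eq_zero_iff_of_nonneg hnn2).mp h2 i (Finset.mem_univ i)
      exact this
    intro i
    by_contra hci
    have hAi : (A i).card = k := by
      have := mul_eq_zero.mp (hterm i)
      rcases this with h | h
      · exact absurd (pow_eq_zero_iff (by norm_num) |>.mp h) hci
      · have : ((A i).card : ℝ) = k := by linarith
        exact_mod_cast this
    have hcj : ∀ j, j ≠ i → c j = 0 := by
      intro j hj
      by_contra hcj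
      have hAj : (A j).card = k := by
        have := mul_eq_zero.mp (hterm j)
        rcases this with h | h
        · exact absurd (pow_eq_zero_iff (by norm_num) |>.mp h) hcj
        · have : ((A j).card : ℝ) = k := by linarith
          exact_mod_cast this
      exact hj (huniq j i hAj hAi)
    have : S = c i := by
      rw [hS]
      rw [Finset.sum_eq_single i]
      · intro j _ hj; exact hcj j hj
      · intro h; exact absurd (Finset.mem_univ i) h
    exact hci (this ▸ hS0)
  have := hli.fintype_card_le_finrank
  simpa using this
end
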